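/- Let n ≥ 3 and k ≥ 1 be integers. The sliced 1-Wasserstein distance SW₁ is a negative semi-definite kernel on the space of empirical measures of size k in ℝ^n: for every integer m > 0, empirical measures α_1, …, α_m of size k in ℝ^n, and real numbers a_1, …, a_m with ∑_i a_i = 0, one has ∑_{i,j} a_i a_j · SW₁(α_i, α_j) ≤ 0. -/

import Mathlib

lemma exchange_abs {a b c d : ℝ} (hab : a ≤ b) (hcd : c ≤ d) :
    |b - d| + |a - c| ≤ |b - c| + |a - d| := by
  rcases abs_cases (b - d) with ⟨h1, h1'⟩ | ⟨h1, h1'⟩ <;>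
  rcases abs_cases (a - c) with ⟨h2, h2'⟩ | ⟨h2, h2'⟩ <;>
  rcases abs_cases (b - c) with ⟨h3, h3'⟩ | ⟨h3, h3'⟩ <;>
  rcases abs_cases (a - d) with ⟨h4, h4'⟩ | ⟨h4, h4'⟩ <;> linarith


open Finset in
lemma sorted_min {k : ℕ} {u v : Fin k → ℝ} (hu : Monotone u) (hv : Monotone v)
    (π : Equiv.Perm (Fin k)) : ∑ i, |u i - v i| ≤ ∑ i, |u i - v (π i)| := by
  classical
  induction k with
  | zero => simp
  | succ k IH =>
    set j := π.symm 0 with hjdef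
    have hπj : π j = 0 := Equiv.apply_symm_apply _ _
    set π' := π * Equiv.swap j 0 with hπ'def
    have hπ'0 : π' 0 = 0 := by
      simp [hπ'def, Equiv.swap_apply_right, hπj]
    have hπ'j : π' j = π 0 := by
      by_cases hj : j = 0
      · simp [hπ'def, hj]
      · simp [hπ'def, Equiv.swap_apply_left, hj]
    have step : ∑ i, |u i - v (π' i)| ≤ ∑ i, |u i - v (π i)| := by
      by_cases hj : j = 0
      · have : π' = π := by
          rw [hπ'def, hj]; simp; rfl
        rw [this]
      · have key : ∀ f g : Fin (k+1) → ℝ, (∀ i, i ≠ 0 → i ≠ j → f i = g i) →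
            f 0 + f j ≤ g 0 + g j → ∑ i, f i ≤ ∑ i, g i := by
          intro f g hfg hle
          rw [← Finset.add_sum_erase _ f (Finset.mem_univ 0),
              ← Finset.add_sum_erase _ g (Finset.mem_univ 0)]
          have hj' : j ∈ (Finset.univ.erase (0 : Fin (k+1))) := by
            simp [hj]
          rw [← Finset.add_sum_erase _ f hj', ← Finset.add_sum_erase _ g hj']
          have heq : ∑ i ∈ (Finset.univ.erase (0 : Fin (k+1))).erase j, f i
              = ∑ i ∈ (Finset.univ.erase (0 : Fin (k+1))).erase j, g i := by
            refine Finset.sum_congr rfl fun i hi => ?_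
            exact hfg i (Finset.ne_of_mem_erase (Finset.mem_of_mem_erase hi))
              (Finset.ne_of_mem_erase hi)
          linarith
        refine key _ _ (fun i hi0 hij => ?_) ?_
        · have : π' i = π i := by
            simp [hπ'def, Equiv.swap_apply_of_ne_of_ne hij hi0]
          rw [this]
        · rw [hπ'0, hπ'j, hπj]
          have h1 : u 0 ≤ u j := hu (Fin.zero_le j)
          have h2 : v 0 ≤ v (π 0) := hv (Fin.zero_le _)
          have := exchange_abs h1 h2
          linarith
    refine le_trans ?_ step
    -- now π' fixes 0
    set q := Equiv.Perm.decomposeFin π' with hq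
    have hsymm : Equiv.Perm.decomposeFin.symm q = π' := Equiv.symm_apply_apply _ _
    have hq1 : q.1 = 0 := by
      rw [← hπ'0, ← hsymm]
      exact (Equiv.Perm.decomposeFin_symm_apply_zero q.1 q.2).symm
    have hsucc : ∀ i : Fin k, π' i.succ = (q.2 i).succ := by
      intro i
      rw [← hsymm]
      rw [show q = (q.1, q.2) from rfl, hq1]
      rw [Equiv.Perm.decomposeFin_symm_apply_succ]
      simp
    rw [Fin.sum_univ_succ, Fin.sum_univ_succ, hπ'0]
    have hIH := IH (u := u ∘ Fin.succ) (v := v ∘ Fin.succ)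
      (hu.comp (Fin.strictMono_succ).monotone) (hv.comp (Fin.strictMono_succ).monotone) q.2
    simp only [Function.comp] at hIH
    simp only [hsucc]
    linarith


lemma iInf_perm_eq {k : ℕ} (u v : Fin k → ℝ) :
    (⨅ π : Equiv.Perm (Fin k), ∑ i, |u i - v (π i)|)
      = ∑ i, |(u ∘ Tuple.sort u) i - (v ∘ Tuple.sort v) i| := by
  set σu := Tuple.sort u
  set σv := Tuple.sort v
  apply le_antisymm
  · have := ciInf_le (Finite.bddBelow_range _) (σv * σu⁻¹)
      (f := fun π : Equiv.Perm (Fin k) => ∑ i, |u i - v (π i)|)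
    refine le_trans this (le_of_eq ?_)
    rw [← Equiv.sum_comp σu (fun i => |u i - v ((σv * σu⁻¹) i)|)]
    refine Finset.sum_congr rfl fun i _ => ?_
    simp [Function.comp]
  · refine le_ciInf fun π => ?_
    have h := sorted_min (Tuple.monotone_sort u) (Tuple.monotone_sort v)
      (σv⁻¹ * π * σu)
    refine le_trans h (le_of_eq ?_)
    rw [← Equiv.sum_comp σu (fun i => |u i - v (π i)|)]
    refine Finset.sum_congr rfl fun i _ => ?_
    simp [Function.comp]
    show |u (σu i) - v (σv (σv.symm (π (σu i))))| = _
    rw [Equiv.apply_symm_apply]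

open MeasureTheory in
lemma negdef_abs {m : ℕ} (s : Fin m → ℝ) (a : Fin m → ℝ) (ha : ∑ i, a i = 0) :
    ∑ i, ∑ j, a i * a j * |s i - s j| ≤ 0 := by
  classical
  set F : Fin m → ℝ → ℝ := fun i x => if s i ≤ x then 1 else 0 with hF
  have hind : ∀ i j, (fun x => (F i x - F j x)^2)
      = Set.indicator (Set.Ico (min (s i) (s j)) (max (s i) (s j))) (fun _ => (1:ℝ)) := by
    intro i j
    funext x
    rcases le_total (s i) (s j) with h | h
    · rw [min_eq_left h, max_eq_right h]
      simp only [hF, Set.indicator, Set.mem_Ico]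
      by_cases h1 : s i ≤ x <;> by_cases h2 : s j ≤ x
      · rw [if_pos h1, if_pos h2, if_neg (by push_neg; exact fun _ => h2)]; norm_num
      · rw [if_pos h1, if_neg h2, if_pos ⟨h1, not_le.1 h2⟩]; norm_num
      · exact absurd (le_trans h h2) h1
      · rw [if_neg h1, if_neg h2, if_neg (by push_neg; exact fun h' => absurd h' h1)]; norm_num
    · rw [min_eq_right h, max_eq_left h]
      simp only [hF, Set.indicator, Set.mem_Ico]
      by_cases h1 : s i ≤ x <;> by_cases h2 : s j ≤ x
      · rw [if_pos h1, if_pos h2, if_neg (by push_neg; exact fun _ => h1)]; norm_num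
      · exact absurd (le_trans h h1) h2
      · rw [if_neg h1, if_pos h2, if_pos ⟨h2, not_le.1 h1⟩]; norm_num
      · rw [if_neg h1, if_neg h2, if_neg (by push_neg; exact fun h' => absurd h' h2)]; norm_num
  have hint : ∀ i j, Integrable (fun x => (F i x - F j x)^2) := by
    intro i j
    rw [hind i j]
    rw [integrable_indicator_iff measurableSet_Ico]
    exact integrableOn_const measure_Ico_lt_top.ne
  have hval : ∀ i j, ∫ x, (F i x - F j x)^2 = |s i - s j| := by
    intro i j
    rw [hind i j, integral_indicator_const (1:ℝ) measurableSet_Ico]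
    rw [measureReal_def, Real.volume_Ico, smul_eq_mul, mul_one, ENNReal.toReal_ofReal (by
      rcases le_total (s i) (s j) with h|h <;> simp [h])]
    rw [max_sub_min_eq_abs, abs_sub_comm]
  have hptwise : ∀ x : ℝ, ∑ i, ∑ j, a i * a j * (F i x - F j x)^2 ≤ 0 := by
    intro x
    have h1 : (∑ i, a i * F i x)^2 = ∑ i, ∑ j, (a i * F i x) * (a j * F j x) := by
      rw [sq, Finset.sum_mul_sum]
    have h2 : ∑ i, ∑ j, a i * a j * (F i x - F j x)^2
        = ∑ i, (a i * (F i x)^2 * (∑ j, a j) + a i * (∑ j, a j * (F j x)^2)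
            - 2 * ∑ j, (a i * F i x) * (a j * F j x)) := by
      refine Finset.sum_congr rfl fun i _ => ?_
      rw [Finset.mul_sum, Finset.mul_sum (a := a i), Finset.mul_sum (a := 2),
        ← Finset.sum_add_distrib, ← Finset.sum_sub_distrib]
      exact Finset.sum_congr rfl fun j _ => by ring
    have expand : ∑ i, ∑ j, a i * a j * (F i x - F j x)^2
        = -2 * (∑ i, a i * F i x)^2 := by
      rw [h2]
      simp only [ha, mul_zero, zero_add]
      rw [Finset.sum_sub_distrib, ← Finset.sum_mul, ha, zero_mul, ← Finset.mul_sum, h1]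
      ring
    rw [expand]
    nlinarith [sq_nonneg (∑ i, a i * F i x)]
  have hswap : ∑ i, ∑ j, a i * a j * |s i - s j|
      = ∫ x, ∑ i, ∑ j, a i * a j * (F i x - F j x)^2 := by
    rw [integral_finset_sum _ (fun i _ => integrable_finset_sum _
      (fun j _ => ((hint i j).const_mul _)))]
    refine Finset.sum_congr rfl fun i _ => ?_
    rw [integral_finset_sum _ (fun j _ => ((hint i j).const_mul _))]
    refine Finset.sum_congr rfl fun j _ => ?_
    rw [MeasureTheory.integral_const_mul, hval]
  rw [hswap]
  exact integral_nonpos fun x => by simpa using hptwise x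

lemma normalize_lipschitz {E : Type*} [NormedAddCommGroup E] [NormedSpace ℝ E] :
    LipschitzOnWith 2 (fun x : E => ‖x‖⁻¹ • x) {x : E | 1 ≤ ‖x‖} := by
  apply LipschitzOnWith.of_dist_le_mul
  intro x hx y hy
  simp only [Set.mem_setOf_eq] at hx hy
  have hax : (0:ℝ) < ‖x‖ := lt_of_lt_of_le one_pos hx
  have hay : (0:ℝ) < ‖y‖ := lt_of_lt_of_le one_pos hy
  rw [dist_eq_norm, dist_eq_norm]
  have decomp : ‖x‖⁻¹ • x - ‖y‖⁻¹ • y = ‖x‖⁻¹ • (x - y) + (‖x‖⁻¹ - ‖y‖⁻¹) • y := by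
    rw [smul_sub, sub_smul]; abel
  rw [decomp]
  refine le_trans (norm_add_le _ _) ?_
  rw [norm_smul, norm_smul, norm_inv, norm_norm, Real.norm_eq_abs]
  have h1 : ‖x‖⁻¹ * ‖x - y‖ ≤ ‖x - y‖ := by
    apply mul_le_of_le_one_left (norm_nonneg _)
    rw [inv_le_one_iff₀]; right; exact hx
  have h2 : |‖x‖⁻¹ - ‖y‖⁻¹| * ‖y‖ ≤ ‖x - y‖ := by
    have heq : ‖x‖⁻¹ - ‖y‖⁻¹ = (‖y‖ - ‖x‖) / (‖x‖ * ‖y‖) := by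
      field_simp
    rw [heq, abs_div, abs_of_pos (mul_pos hax hay), div_mul_eq_mul_div]
    rw [div_le_iff₀ (mul_pos hax hay)]
    have h3 : |‖y‖ - ‖x‖| ≤ ‖x - y‖ := by
      rw [norm_sub_rev x y]; exact abs_norm_sub_norm_le y x
    calc |‖y‖ - ‖x‖| * ‖y‖ ≤ ‖x - y‖ * ‖y‖ := by
          exact mul_le_mul_of_nonneg_right h3 hay.le
      _ ≤ ‖x - y‖ * (‖x‖ * ‖y‖) := by nlinarith [mul_nonneg (mul_nonneg (norm_nonneg (x - y)) hay.le) (sub_nonneg.2 hx)]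
  push_cast
  linarith

open MeasureTheory
open scoped Pointwise


-- finiteness of the hausdorff measure of a cube face
lemma face_hausdorff_lt_top (n : ℕ) (hn : 1 ≤ n) (i : Fin n) (s : ℝ) :
    μH[(n:ℝ)-1] {x : EuclideanSpace ℝ (Fin n) | x i = s ∧ ∀ j, |x j| ≤ Real.sqrt n} < ⊤ := by
  classical
  have hd0 : (0:ℝ) ≤ (n:ℝ) - 1 := by
    have : (1:ℝ) ≤ n := by exact_mod_cast hn
    linarith
  set flin : EuclideanSpace ℝ (Fin n) →ₗ[ℝ] ℝ :=
    ((EuclideanSpace.proj (𝕜 := ℝ) i : EuclideanSpace ℝ (Fin n) →L[ℝ] ℝ) : EuclideanSpace ℝ (Fin n) →ₗ[ℝ] ℝ) with hflin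
  set H : Submodule ℝ (EuclideanSpace ℝ (Fin n)) := LinearMap.ker flin with hH
  have hflin_apply : ∀ x : EuclideanSpace ℝ (Fin n), flin x = x i := fun x => rfl
  have hfr : Module.finrank ℝ H = n - 1 := by
    have hsurj : Function.Surjective flin := by
      intro c
      refine ⟨EuclideanSpace.single i c, ?_⟩
      rw [hflin_apply]
      simp
    have hrn := LinearMap.finrank_range_add_finrank_ker flin
    rw [← hH] at hrn
    rw [LinearMap.range_eq_top.2 hsurj, finrank_top, finrank_euclideanSpace_fin,
      Module.finrank_self] at hrn
    omega
  set K : Set H := {y : H | ∀ j, |(y : EuclideanSpace ℝ (Fin n)) j| ≤ Real.sqrt n} with hKdef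
  have hKclosed : IsClosed K := by
    have : K = ⋂ j, (fun y : H => |(y : EuclideanSpace ℝ (Fin n)) j|) ⁻¹' Set.Iic (Real.sqrt n) := by
      ext y; simp [hKdef]
    rw [this]
    refine isClosed_iInter fun j => IsClosed.preimage ?_ isClosed_Iic
    exact ((EuclideanSpace.proj (𝕜 := ℝ) j).continuous.comp continuous_subtype_val).abs
  have hKbdd : Bornology.IsBounded K := by
    rw [isBounded_iff_forall_norm_le]
    refine ⟨n, fun y hy => ?_⟩
    have h1 : ‖y‖ = ‖(y : EuclideanSpace ℝ (Fin n))‖ := rfl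
    rw [h1, EuclideanSpace.norm_eq]
    have h2 : (∑ j, ‖(y : EuclideanSpace ℝ (Fin n)) j‖ ^ 2) ≤ ((n : ℝ) * n) := by
      have h3 : ∀ j : Fin n, ‖(y : EuclideanSpace ℝ (Fin n)) j‖ ^ 2 ≤ (n:ℝ) := by
        intro j
        rw [Real.norm_eq_abs]
        calc |(y : EuclideanSpace ℝ (Fin n)) j| ^ 2 ≤ Real.sqrt n ^ 2 :=
              pow_le_pow_left₀ (abs_nonneg _) (hy j) 2
          _ = (n:ℝ) := Real.sq_sqrt (Nat.cast_nonneg n)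
      calc (∑ j, ‖(y : EuclideanSpace ℝ (Fin n)) j‖ ^ 2) ≤ (∑ _j : Fin n, (n:ℝ)) := Finset.sum_le_sum fun j _ => h3 j
        _ = ((n:ℝ) * n) := by
          rw [Finset.sum_const, Finset.card_univ, Fintype.card_fin, nsmul_eq_mul]
    calc Real.sqrt (∑ j, ‖(y : EuclideanSpace ℝ (Fin n)) j‖ ^ 2) ≤ Real.sqrt ((n:ℝ) * n) := Real.sqrt_le_sqrt h2
      _ = n := Real.sqrt_mul_self (Nat.cast_nonneg n)
  have hK : IsCompact K := Metric.isCompact_of_isClosed_isBounded hKclosed hKbdd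
  have hKfin : μH[(n:ℝ)-1] (Subtype.val '' K) < ⊤ := by
    rw [Isometry.hausdorffMeasure_image isometry_subtype_coe (Or.inl hd0)]
    have hcast : ((Module.finrank ℝ H : ℕ) : ℝ) = (n:ℝ) - 1 := by
      rw [hfr, Nat.cast_sub hn, Nat.cast_one]
    rw [← hcast]
    exact hK.measure_lt_top
  have hsub : {x : EuclideanSpace ℝ (Fin n) | x i = s ∧ ∀ j, |x j| ≤ Real.sqrt n}
      ⊆ (EuclideanSpace.single i s) +ᵥ (Subtype.val '' K) := by
    intro x hx
    obtain ⟨hxi, hxj⟩ := hx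
    have hy : x - EuclideanSpace.single i s ∈ H := by
      rw [hH, LinearMap.mem_ker, hflin_apply]
      simp [hxi, EuclideanSpace.single_apply]
    refine ⟨x - EuclideanSpace.single i s, ⟨⟨_, hy⟩, fun j => ?_, rfl⟩, by
      show EuclideanSpace.single i s + (x - EuclideanSpace.single i s) = x
      abel⟩
    by_cases hji : j = i
    · subst hji
      simp [hxi, EuclideanSpace.single_apply, Real.sqrt_nonneg]
    · simp only [PiLp.sub_apply, EuclideanSpace.single_apply, if_neg hji, sub_zero]
      exact hxj j
  calc μH[(n:ℝ)-1] {x : EuclideanSpace ℝ (Fin n) | x i = s ∧ ∀ j, |x j| ≤ Real.sqrt n}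
      ≤ μH[(n:ℝ)-1] ((EuclideanSpace.single i s) +ᵥ (Subtype.val '' K)) := measure_mono hsub
    _ = μH[(n:ℝ)-1] (Subtype.val '' K) := by
        rw [← Set.image_vadd, Isometry.hausdorffMeasure_image
          (isometry_vadd (EuclideanSpace ℝ (Fin n)) (EuclideanSpace.single i s)) (Or.inl hd0)]
    _ < ⊤ := hKfin

lemma sphere_hausdorff_lt_top (n : ℕ) (hn : 3 ≤ n) :
    μH[(n:ℝ)-1] (Metric.sphere (0 : EuclideanSpace ℝ (Fin n)) 1) < ⊤ := by
  classical
  have hn1 : 1 ≤ n := le_trans (by norm_num) hn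
  have hd0 : (0:ℝ) ≤ (n:ℝ) - 1 := by
    have : (1:ℝ) ≤ n := by exact_mod_cast hn1
    linarith
  have hnpos : (0:ℝ) < n := by positivity
  set f : EuclideanSpace ℝ (Fin n) → EuclideanSpace ℝ (Fin n) := fun x => ‖x‖⁻¹ • x with hf
  set T : Fin n → Set (EuclideanSpace ℝ (Fin n)) :=
    fun i => {x | 1 ≤ ‖x‖ ∧ |x i| = 1 ∧ ∀ j, |x j| ≤ Real.sqrt n} with hT
  have hcover : Metric.sphere (0 : EuclideanSpace ℝ (Fin n)) 1 ⊆ ⋃ i, f '' (T i) := by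
    intro θ hθ
    have hθn : ‖θ‖ = 1 := by simpa using mem_sphere_zero_iff_norm.1 hθ
    have hsum : ∑ j, |θ j| ^ 2 = 1 := by
      have h1 : ‖θ‖ = Real.sqrt (∑ j, ‖θ j‖ ^ 2) := EuclideanSpace.norm_eq θ
      have h2 : Real.sqrt (∑ j, |θ j| ^ 2) = 1 := by
        rw [← hθn, h1]
        simp [Real.norm_eq_abs]
      have h3 : (0:ℝ) ≤ ∑ j, |θ j| ^ 2 := Finset.sum_nonneg fun j _ => sq_nonneg _
      nlinarith [Real.sq_sqrt h3]
    have hjle : ∀ j, |θ j| ≤ 1 := by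
      intro j
      have h1 : |θ j| ^ 2 ≤ 1 := by
        rw [← hsum]
        exact Finset.single_le_sum (fun t _ => sq_nonneg (|θ t|)) (Finset.mem_univ j)
      nlinarith [abs_nonneg (θ j)]
    obtain ⟨i, _, hi⟩ := Finset.exists_le_of_sum_le (f := fun _ : Fin n => (1:ℝ)/n)
      (g := fun j => |θ j| ^ 2) ⟨⟨0, by omega⟩, Finset.mem_univ _⟩
      (by rw [hsum, Finset.sum_const, Finset.card_univ, Fintype.card_fin, nsmul_eq_mul]
          field_simp
          exact le_rfl)
    set c := |θ i| with hc
    have hcpos : 0 < c := by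
      have h4 : (0:ℝ) < 1/n := by positivity
      nlinarith [abs_nonneg (θ i)]
    have hcinv : c⁻¹ ≤ Real.sqrt n := by
      have h5 : Real.sqrt (1/n) ≤ c := by
        have := Real.sqrt_le_sqrt hi
        rwa [Real.sqrt_sq_eq_abs, abs_abs] at this
      have h6 : Real.sqrt (1/n) = (Real.sqrt n)⁻¹ := by
        rw [one_div, Real.sqrt_inv]
      have h7 : (0:ℝ) < Real.sqrt n := Real.sqrt_pos.2 hnpos
      calc c⁻¹ ≤ (Real.sqrt (1/n))⁻¹ := by
            apply inv_anti₀ _ h5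
            rw [h6]; positivity
        _ = Real.sqrt n := by rw [h6, inv_inv]
    refine Set.mem_iUnion.2 ⟨i, ⟨c⁻¹ • θ, ⟨?_, ?_, ?_⟩, ?_⟩⟩
    · have : ‖c⁻¹ • θ‖ = c⁻¹ := by
        rw [norm_smul, hθn, mul_one, Real.norm_eq_abs, abs_inv, abs_abs]
      rw [this]
      rw [one_le_inv_iff₀]
      exact ⟨hcpos, hjle i⟩
    · have : (c⁻¹ • θ) i = c⁻¹ * θ i := rfl
      rw [this, abs_mul, abs_inv, abs_abs, ← hc, inv_mul_cancel₀ hcpos.ne']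
    · intro j
      have : (c⁻¹ • θ) j = c⁻¹ * θ j := rfl
      rw [this, abs_mul, abs_inv, abs_abs, ← hc]
      calc c⁻¹ * |θ j| ≤ c⁻¹ * 1 := by
            apply mul_le_mul_of_nonneg_left (hjle j) (by positivity)
        _ ≤ Real.sqrt n := by rw [mul_one]; exact hcinv
    · have hnorm : ‖c⁻¹ • θ‖ = c⁻¹ := by
        rw [norm_smul, hθn, mul_one, Real.norm_eq_abs, abs_inv, abs_abs]
      rw [hf]
      simp only [hnorm, inv_inv]
      rw [smul_smul, mul_inv_cancel₀ hcpos.ne', one_smul]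
  have hTP : ∀ i, T i ⊆ {x : EuclideanSpace ℝ (Fin n) | x i = 1 ∧ ∀ j, |x j| ≤ Real.sqrt n}
      ∪ {x : EuclideanSpace ℝ (Fin n) | x i = -1 ∧ ∀ j, |x j| ≤ Real.sqrt n} := by
    intro i x hx
    obtain ⟨-, hxi, hxj⟩ := hx
    rcases (abs_eq (by norm_num : (0:ℝ) ≤ 1)).1 hxi with h | h
    · exact Or.inl ⟨h, hxj⟩
    · exact Or.inr ⟨h, hxj⟩
  calc μH[(n:ℝ)-1] (Metric.sphere (0 : EuclideanSpace ℝ (Fin n)) 1)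
      ≤ ∑ i, μH[(n:ℝ)-1] (f '' (T i)) :=
        le_trans (measure_mono hcover) (measure_iUnion_fintype_le _ _)
    _ < ⊤ := by
        refine ENNReal.sum_lt_top.2 fun i _ => ?_
        have hlip : LipschitzOnWith 2 f (T i) := by
          apply (normalize_lipschitz (E := EuclideanSpace ℝ (Fin n))).mono
          intro x hx
          exact hx.1
        refine lt_of_le_of_lt (hlip.hausdorffMeasure_image_le hd0) ?_
        refine ENNReal.mul_lt_top ?_ ?_
        · exact ENNReal.rpow_lt_top_of_nonneg hd0 (by norm_num)
        · refine lt_of_le_of_lt (measure_mono (hTP i)) ?_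
          refine lt_of_le_of_lt (measure_union_le _ _) ?_
          exact ENNReal.add_lt_top.2 ⟨face_hausdorff_lt_top n hn1 i 1,
            face_hausdorff_lt_top n hn1 i (-1)⟩
lemma negdef_match {k m : ℕ} (w : Fin m → Fin k → ℝ) (a : Fin m → ℝ) (ha : ∑ i, a i = 0) :
    ∑ i, ∑ j, a i * a j * (⨅ π : Equiv.Perm (Fin k), ∑ t, |w i t - w j (π t)|) ≤ 0 := by
  set s : Fin m → Fin k → ℝ := fun i => (w i) ∘ Tuple.sort (w i) with hsdef
  have hs : ∀ i j, (⨅ π : Equiv.Perm (Fin k), ∑ t, |w i t - w j (π t)|)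
      = ∑ t, |s i t - s j t| := fun i j => iInf_perm_eq _ _
  calc ∑ i, ∑ j, a i * a j * (⨅ π : Equiv.Perm (Fin k), ∑ t, |w i t - w j (π t)|)
      = ∑ i, ∑ j, ∑ t, a i * a j * |s i t - s j t| := by
        simp_rw [hs, Finset.mul_sum]
    _ = ∑ t, ∑ i, ∑ j, a i * a j * |s i t - s j t| := by
        rw [show (∑ i, ∑ j, ∑ t, a i * a j * |s i t - s j t|)
            = ∑ i, ∑ t, ∑ j, a i * a j * |s i t - s j t| from
          Finset.sum_congr rfl fun i _ => Finset.sum_comm]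
        exact Finset.sum_comm
    _ ≤ 0 := Finset.sum_nonpos fun t _ => negdef_abs (fun i => s i t) a ha



open MeasureTheory
open scoped RealInnerProductSpace

/-- The sliced 1-Wasserstein distance between the empirical measures `(1/k)∑ δ_{xⁱ}` and
`(1/k)∑ δ_{yⁱ}` in `ℝ^n`:
`SW₁ = ∫_{𝕊^{n-1}} (1/k)·min_π ∑ᵢ |⟨xⁱ, θ⟩ − ⟨y^{π(i)}, θ⟩| dθ`, the integral being over
the unit sphere with its surface (Hausdorff) measure. -/
noncomputable def empSW1 {n k : ℕ} (x y : Fin k → EuclideanSpace ℝ (Fin n)) : ℝ :=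
  ∫ θ in Metric.sphere (0 : EuclideanSpace ℝ (Fin n)) 1,
    (1 / (k : ℝ)) * ⨅ π : Equiv.Perm (Fin k), ∑ i, |⟪x i, θ⟫ - ⟪y (π i), θ⟫|
    ∂ μH[(n:ℝ) - 1]

/-- For `n ≥ 3`, `k ≥ 1`, the sliced 1-Wasserstein distance `SW₁` is a
negative semi-definite kernel on the space of empirical measures of size `k` in `ℝ^n`:
for every `m > 0`, empirical measures `α₁, …, α_m` and reals `a₁, …, a_m` with `∑ aᵢ = 0`,
`∑_{i,j} aᵢ aⱼ SW₁(αᵢ, αⱼ) ≤ 0`. -/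
theorem sw1_negative_semidefinite (n k : ℕ) (hn : 3 ≤ n) (hk : 1 ≤ k)
    (m : ℕ) (hm : 0 < m) (α : Fin m → (Fin k → EuclideanSpace ℝ (Fin n)))
    (a : Fin m → ℝ) (ha : ∑ i, a i = 0) :
    ∑ i, ∑ j, a i * a j * empSW1 (α i) (α j) ≤ 0 := by
  classical
  set μ : Measure (EuclideanSpace ℝ (Fin n)) :=
    (μH[(n:ℝ)-1]).restrict (Metric.sphere (0 : EuclideanSpace ℝ (Fin n)) 1) with hμ
  haveI hfin : IsFiniteMeasure μ := ⟨by
    rw [hμ, Measure.restrict_apply_univ]; exact sphere_hausdorff_lt_top n hn⟩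
  set g : Fin m → Fin m → EuclideanSpace ℝ (Fin n) → ℝ := fun i j θ =>
    (1 / (k : ℝ)) * ⨅ π : Equiv.Perm (Fin k), ∑ t, |⟪α i t, θ⟫ - ⟪α j (π t), θ⟫| with hg
  have hemp : ∀ i j, empSW1 (α i) (α j) = ∫ θ, g i j θ ∂μ := fun i j => rfl
  have hmeas : ∀ i j, Measurable (g i j) := by
    intro i j
    apply Measurable.const_mul
    apply Measurable.iInf
    intro π
    apply Finset.measurable_sum
    intro t _
    apply Measurable.abs
    apply Measurable.sub
    · exact (continuous_const.inner continuous_id).measurable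
    · exact (continuous_const.inner continuous_id).measurable
  have hnonneg : ∀ i j θ,
      0 ≤ ⨅ π : Equiv.Perm (Fin k), ∑ t, |⟪α i t, θ⟫ - ⟪α j (π t), θ⟫| :=
    fun i j θ => le_ciInf fun π => Finset.sum_nonneg fun t _ => abs_nonneg _
  have hint : ∀ i j, Integrable (g i j) μ := by
    intro i j
    refine Integrable.mono' (integrable_const ((1 / (k : ℝ)) * ∑ t, (‖α i t‖ + ‖α j t‖)))
      (hmeas i j).aestronglyMeasurable ?_
    rw [hμ]
    refine (MeasureTheory.ae_restrict_iff' Metric.isClosed_sphere.measurableSet).2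
      (Filter.Eventually.of_forall fun θ hθ => ?_)
    have hθn : ‖θ‖ = 1 := by simpa using mem_sphere_zero_iff_norm.1 hθ
    have h1 : (⨅ π : Equiv.Perm (Fin k), ∑ t, |⟪α i t, θ⟫ - ⟪α j (π t), θ⟫|)
        ≤ ∑ t, |⟪α i t, θ⟫ - ⟪α j t, θ⟫| := by
      have := ciInf_le (Finite.bddBelow_range
        (fun π : Equiv.Perm (Fin k) => ∑ t, |⟪α i t, θ⟫ - ⟪α j (π t), θ⟫|)) 1
      simpa using this
    have h2 : ∑ t, |⟪α i t, θ⟫ - ⟪α j t, θ⟫| ≤ ∑ t, (‖α i t‖ + ‖α j t‖) := by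
      refine Finset.sum_le_sum fun t _ => ?_
      calc |⟪α i t, θ⟫ - ⟪α j t, θ⟫| ≤ |⟪α i t, θ⟫| + |⟪α j t, θ⟫| := abs_sub _ _
        _ ≤ ‖α i t‖ * ‖θ‖ + ‖α j t‖ * ‖θ‖ :=
            add_le_add (abs_real_inner_le_norm _ _) (abs_real_inner_le_norm _ _)
        _ = ‖α i t‖ + ‖α j t‖ := by rw [hθn, mul_one, mul_one]
    have hk0 : (0:ℝ) ≤ 1 / (k:ℝ) := by positivity
    rw [hg]
    simp only [Real.norm_eq_abs]
    rw [abs_of_nonneg (mul_nonneg hk0 (hnonneg i j θ))]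
    exact mul_le_mul_of_nonneg_left (le_trans h1 h2) hk0
  have key : ∫ θ, (∑ i, ∑ j, a i * a j * g i j θ) ∂μ
      = ∑ i, ∑ j, a i * a j * empSW1 (α i) (α j) := by
    rw [integral_finset_sum _ (fun i _ => integrable_finset_sum _
      (fun j _ => ((hint i j).const_mul _)))]
    refine Finset.sum_congr rfl fun i _ => ?_
    rw [integral_finset_sum _ (fun j _ => (hint i j).const_mul _)]
    refine Finset.sum_congr rfl fun j _ => ?_
    rw [MeasureTheory.integral_const_mul, hemp]
  rw [← key]
  refine integral_nonpos fun θ => ?_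
  have hmatch := negdef_match (fun i t => ⟪α i t, θ⟫) a ha
  have hk0 : (0:ℝ) ≤ 1 / (k:ℝ) := by positivity
  have hre : ∑ i, ∑ j, a i * a j * g i j θ
      = (1 / (k:ℝ)) * ∑ i, ∑ j, a i * a j *
          (⨅ π : Equiv.Perm (Fin k), ∑ t, |⟪α i t, θ⟫ - ⟪α j (π t), θ⟫|) := by
    rw [Finset.mul_sum]
    refine Finset.sum_congr rfl fun i _ => ?_
    rw [Finset.mul_sum]
    exact Finset.sum_congr rfl fun j _ => by rw [hg]; ring
  show ∑ i, ∑ j, a i * a j * g i j θ ≤ 0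
  rw [hre]
  exact mul_nonpos_of_nonneg_of_nonpos hk0 hmatch
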